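/- Let p1, p2, p3, p4, p5 be real numbers and define H(l) = l⁵ + p1·l⁴ + p2·l³ + p3·l² + p4·l + p5, a1 = −(6/25)·p1² + (3/5)·p2, b1 = −(6/25)·p1·p2 + (2/5)·p3 + (8/125)·p1³, c1 = −(3/625)·p1⁴ + (3/125)·p1²·p2 − (2/25)·p1·p3 + (1/5)·p4, and Δ0 = a1² − 4·c1. If p5 ≥ 0, b1 = 0, Δ0 ≥ 0, a1 ≥ 0, and c1 > 0, then H has no positive real root. -/

import Mathlib

theorem stmt8 (p1 p2 p3 p4 p5 : ℝ)
    (H : ℝ → ℝ)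
    (hH : ∀ l, H l = l ^ 5 + p1 * l ^ 4 + p2 * l ^ 3 + p3 * l ^ 2 + p4 * l + p5)
    (a1 b1 c1 Δ0 : ℝ)
    (ha1 : a1 = -(6/25) * p1 ^ 2 + (3/5) * p2)
    (hb1 : b1 = -(6/25) * p1 * p2 + (2/5) * p3 + (8/125) * p1 ^ 3)
    (hc1 : c1 = -(3/625) * p1 ^ 4 + (3/125) * p1 ^ 2 * p2 - (2/25) * p1 * p3 + (1/5) * p4)
    (hΔ0 : Δ0 = a1 ^ 2 - 4 * c1)
    (hp5 : 0 ≤ p5) (hb10 : b1 = 0) (hΔ0pos : 0 ≤ Δ0) (ha1pos : 0 ≤ a1) (hc1pos : 0 < c1) :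
    ∀ l : ℝ, 0 < l → H l ≠ 0 := by
  have hfun : H = fun l => l ^ 5 + p1 * l ^ 4 + p2 * l ^ 3 + p3 * l ^ 2 + p4 * l + p5 :=
    funext hH
  subst hfun
  have hderiv : ∀ x : ℝ, HasDerivAt
      (fun l : ℝ => l ^ 5 + p1 * l ^ 4 + p2 * l ^ 3 + p3 * l ^ 2 + p4 * l + p5)
      (5 * x ^ 4 + 4 * p1 * x ^ 3 + 3 * p2 * x ^ 2 + 2 * p3 * x + p4) x := by
    intro x
    have h1 := (((((hasDerivAt_pow 5 x).add ((hasDerivAt_pow 4 x).const_mul p1)).add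
      ((hasDerivAt_pow 3 x).const_mul p2)).add
      ((hasDerivAt_pow 2 x).const_mul p3)).add
      ((hasDerivAt_id' (x := x)).const_mul p4)).add_const p5
    refine h1.congr_deriv ?_
    norm_num
    ring
  have hmono : StrictMono
      (fun l : ℝ => l ^ 5 + p1 * l ^ 4 + p2 * l ^ 3 + p3 * l ^ 2 + p4 * l + p5) := by
    apply strictMono_of_deriv_pos
    intro x
    rw [(hderiv x).deriv]
    have heq : 5 * x ^ 4 + 4 * p1 * x ^ 3 + 3 * p2 * x ^ 2 + 2 * p3 * x + p4 =
        5 * ((x + p1/5) ^ 4 + a1 * (x + p1/5) ^ 2 + b1 * (x + p1/5) + c1) := by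
      subst ha1 hb1 hc1; ring
    rw [heq, hb10]
    nlinarith [sq_nonneg ((x + p1/5) ^ 2),
      mul_nonneg ha1pos (sq_nonneg (x + p1/5))]
  intro l hl hcontra
  have h0 : (fun l : ℝ => l ^ 5 + p1 * l ^ 4 + p2 * l ^ 3 + p3 * l ^ 2 + p4 * l + p5) 0 <
      (fun l : ℝ => l ^ 5 + p1 * l ^ 4 + p2 * l ^ 3 + p3 * l ^ 2 + p4 * l + p5) l :=
    hmono hl
  simp only at h0 hcontra
  norm_num at h0
  linarith
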